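/- Let m ≥ 2 be an integer and ε = 1/(2m). For every outcome sequence y_1, y_2, … ∈ {0,1} and every forecast sequence produced by the POTC-Cal algorithm, for every index i ∈ {1,…,m} and every time T ≥ 1, the quantity E_T^{(i)} := N_i^T · max(d_i^T, e_i^T) satisfies E_T^{(i)} ≤ 1. -/
import Mathlib


namespace Calib

/-- Gridpoint M_i = (2i-1)/(2m). -/
noncomputable def Mg (m i : ℕ) : ℝ := (2 * (i : ℝ) - 1) / (2 * m)

/-- Left endpoint l_i = (i-1)/m. -/
noncomputable def lept (m i : ℕ) : ℝ := ((i : ℝ) - 1) / m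

/-- Right endpoint r_i = i/m. -/
noncomputable def rept (m i : ℕ) : ℝ := (i : ℝ) / m

/-- N_i^t = #{1 ≤ s ≤ t : p_s = M_i}. -/
def Ncount (a : ℕ → ℕ) (i t : ℕ) : ℕ :=
  ((Finset.Icc 1 t).filter (fun s => a s = i)).card

/-- Empirical average p_i^t of the outcomes on rounds where M_i was forecast. -/
noncomputable def emp (m : ℕ) (a : ℕ → ℕ) (y : ℕ → ℝ) (i t : ℕ) : ℝ :=
  if 0 < Ncount a i t then
    (∑ s ∈ Finset.Icc 1 t, if a s = i then y s else 0) / (Ncount a i t)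
  else Mg m i

/-- Deficit d_i^t = l_i - p_i^t. -/
noncomputable def defc (m : ℕ) (a : ℕ → ℕ) (y : ℕ → ℝ) (i t : ℕ) : ℝ :=
  lept m i - emp m a y i t

/-- Excess e_i^t = p_i^t - r_i. -/
noncomputable def exc (m : ℕ) (a : ℕ → ℕ) (y : ℕ → ℝ) (i t : ℕ) : ℝ :=
  emp m a y i t - rept m i

/-- Condition A at time t: some i ∈ {1,…,m} has d_i^t ≤ 0 and e_i^t ≤ 0. -/
def condA (m : ℕ) (a : ℕ → ℕ) (y : ℕ → ℝ) (t : ℕ) : Prop :=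
  ∃ i, 1 ≤ i ∧ i ≤ m ∧ defc m a y i t ≤ 0 ∧ exc m a y i t ≤ 0

/-- The POTC-Cal algorithm (binary outcomes), allowing any admissible choice of
index at each step: p_1 = M_1; at time t+1, if condition A holds play a
witnessing M_i; otherwise pick i with e_i^t > 0 and d_{i+1}^t > 0 and play
M_i if y_{t+1} = 0 and M_{i+1} if y_{t+1} = 1. -/
def POTC (m : ℕ) (a : ℕ → ℕ) (y : ℕ → ℝ) : Prop :=
  a 1 = 1 ∧
  ∀ t, 1 ≤ t →
    (∃ i, 1 ≤ i ∧ i ≤ m ∧ defc m a y i t ≤ 0 ∧ exc m a y i t ≤ 0 ∧ a (t + 1) = i) ∨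
    (¬ condA m a y t ∧
      ∃ i, 1 ≤ i ∧ i ≤ m - 1 ∧ 0 < exc m a y i t ∧ 0 < defc m a y (i + 1) t ∧
        (y (t + 1) = 0 → a (t + 1) = i) ∧ (y (t + 1) = 1 → a (t + 1) = i + 1))

end Calib

namespace Calib

noncomputable def Ssum (a : ℕ → ℕ) (y : ℕ → ℝ) (i t : ℕ) : ℝ :=
  ∑ s ∈ Finset.Icc 1 t, if a s = i then y s else 0

noncomputable def Dq (m : ℕ) (a : ℕ → ℕ) (y : ℕ → ℝ) (i t : ℕ) : ℝ :=
  (Ncount a i t : ℝ) * lept m i - Ssum a y i t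

noncomputable def Ex (m : ℕ) (a : ℕ → ℕ) (y : ℕ → ℝ) (i t : ℕ) : ℝ :=
  Ssum a y i t - (Ncount a i t : ℝ) * rept m i

lemma Ncount_succ (a : ℕ → ℕ) (i t : ℕ) :
    Ncount a i (t+1) = Ncount a i t + if a (t+1) = i then 1 else 0 := by
  unfold Ncount
  rw [Finset.card_filter, Finset.card_filter, Finset.sum_Icc_succ_top (Nat.le_add_left 1 t)]

lemma Ssum_succ (a : ℕ → ℕ) (y : ℕ → ℝ) (i t : ℕ) :
    Ssum a y i (t+1) = Ssum a y i t + if a (t+1) = i then y (t+1) else 0 := by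
  unfold Ssum
  rw [Finset.sum_Icc_succ_top (Nat.le_add_left 1 t)]

lemma Ssum_eq_zero (a : ℕ → ℕ) (y : ℕ → ℝ) (i t : ℕ) (h : Ncount a i t = 0) :
    Ssum a y i t = 0 := by
  have hf : ∀ s ∈ Finset.Icc 1 t, a s ≠ i := by
    intro s hs
    have := Finset.card_eq_zero.mp h
    intro hsi
    have : s ∈ (Finset.Icc 1 t).filter (fun s => a s = i) := Finset.mem_filter.mpr ⟨hs, hsi⟩
    simp [Finset.card_eq_zero.mp h] at this
  exact Finset.sum_eq_zero fun s hs => by simp [hf s hs]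

lemma emp_eq (m : ℕ) (a : ℕ → ℕ) (y : ℕ → ℝ) (i t : ℕ) (h : 0 < Ncount a i t) :
    emp m a y i t = Ssum a y i t / (Ncount a i t : ℝ) := by
  unfold emp Ssum; rw [if_pos h]

lemma mul_defc (m : ℕ) (a : ℕ → ℕ) (y : ℕ → ℝ) (i t : ℕ) (h : 0 < Ncount a i t) :
    (Ncount a i t : ℝ) * defc m a y i t = Dq m a y i t := by
  have hN : (Ncount a i t : ℝ) ≠ 0 := by positivity
  unfold defc Dq
  rw [emp_eq m a y i t h]
  field_simp
  try ring

lemma mul_exc (m : ℕ) (a : ℕ → ℕ) (y : ℕ → ℝ) (i t : ℕ) (h : 0 < Ncount a i t) :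
    (Ncount a i t : ℝ) * exc m a y i t = Ex m a y i t := by
  have hN : (Ncount a i t : ℝ) ≠ 0 := by positivity
  unfold exc Ex
  rw [emp_eq m a y i t h]
  field_simp
  try ring

lemma Dq_add_Ex (m : ℕ) (hm : 0 < m) (a : ℕ → ℕ) (y : ℕ → ℝ) (i t : ℕ) :
    Dq m a y i t + Ex m a y i t = -(Ncount a i t : ℝ) / m := by
  have hm' : (m : ℝ) ≠ 0 := by positivity
  unfold Dq Ex lept rept
  field_simp
  try ring

lemma Ncount_pos_of_exc_pos (m : ℕ) (hm : 0 < m) (a : ℕ → ℕ) (y : ℕ → ℝ) (i t : ℕ)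
    (h : 0 < exc m a y i t) : 0 < Ncount a i t := by
  by_contra h0
  push_neg at h0
  have hN : Ncount a i t = 0 := Nat.le_zero.mp h0
  have hm' : (0:ℝ) < m := by exact_mod_cast hm
  have : exc m a y i t = -(1 / (2 * m)) := by
    unfold exc emp Mg rept
    rw [if_neg (by omega)]
    field_simp
    try ring
  rw [this] at h
  have : (0:ℝ) < 1 / (2 * (m:ℝ)) := by positivity
  linarith

lemma Ncount_pos_of_defc_pos (m : ℕ) (hm : 0 < m) (a : ℕ → ℕ) (y : ℕ → ℝ) (i t : ℕ)
    (h : 0 < defc m a y i t) : 0 < Ncount a i t := by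
  by_contra h0
  push_neg at h0
  have hN : Ncount a i t = 0 := Nat.le_zero.mp h0
  have hm' : (0:ℝ) < m := by exact_mod_cast hm
  have : defc m a y i t = -(1 / (2 * m)) := by
    unfold defc emp Mg lept
    rw [if_neg (by omega)]
    field_simp
    try ring
  rw [this] at h
  have : (0:ℝ) < 1 / (2 * (m:ℝ)) := by positivity
  linarith

lemma Dq_succ_eq (m : ℕ) (a : ℕ → ℕ) (y : ℕ → ℝ) (i t : ℕ) (h : a (t+1) = i) :
    Dq m a y i (t+1) = Dq m a y i t + lept m i - y (t+1) := by
  unfold Dq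
  rw [Ncount_succ, Ssum_succ, if_pos h, if_pos h]
  push_cast
  ring

lemma Ex_succ_eq (m : ℕ) (a : ℕ → ℕ) (y : ℕ → ℝ) (i t : ℕ) (h : a (t+1) = i) :
    Ex m a y i (t+1) = Ex m a y i t + y (t+1) - rept m i := by
  unfold Ex
  rw [Ncount_succ, Ssum_succ, if_pos h, if_pos h]
  push_cast
  ring

lemma Dq_succ_ne (m : ℕ) (a : ℕ → ℕ) (y : ℕ → ℝ) (i t : ℕ) (h : a (t+1) ≠ i) :
    Dq m a y i (t+1) = Dq m a y i t := by
  unfold Dq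
  rw [Ncount_succ, Ssum_succ, if_neg h, if_neg h]
  push_cast
  ring

lemma Ex_succ_ne (m : ℕ) (a : ℕ → ℕ) (y : ℕ → ℝ) (i t : ℕ) (h : a (t+1) ≠ i) :
    Ex m a y i (t+1) = Ex m a y i t := by
  unfold Ex
  rw [Ncount_succ, Ssum_succ, if_neg h, if_neg h]
  push_cast
  ring

end Calib
namespace Calib

lemma lept_le_one (m i : ℕ) (hm : 0 < m) (him : i ≤ m) : lept m i ≤ 1 := by
  have hm' : (0:ℝ) < m := by exact_mod_cast hm
  have : (i:ℝ) ≤ m := by exact_mod_cast him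
  rw [lept, div_le_one hm']
  linarith

lemma rept_nonneg (m i : ℕ) : 0 ≤ rept m i := by
  unfold rept; positivity

lemma invariant (m : ℕ) (hm : 2 ≤ m) (y : ℕ → ℝ) (hy : ∀ t, y t = 0 ∨ y t = 1)
    (a : ℕ → ℕ) (halg : POTC m a y) :
    ∀ t j, j ≤ m → Dq m a y j t ≤ 1 ∧ Ex m a y j t ≤ 1 := by
  have hm0 : 0 < m := by omega
  have hy0 : ∀ t, 0 ≤ y t := fun t => by rcases hy t with h | h <;> rw [h] <;> norm_num
  have hy1 : ∀ t, y t ≤ 1 := fun t => by rcases hy t with h | h <;> rw [h] <;> norm_num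
  intro t
  induction t with
  | zero =>
    intro j _
    constructor <;> simp [Dq, Ex, Ncount, Ssum]
  | succ t ih =>
    intro j hjm
    -- general step helper: if D ≤ 0 and E ≤ 0 at index j and a(t+1)=j
    rcases Nat.eq_zero_or_pos t with rfl | ht
    · -- step from time 0 to 1 : a 1 = 1, all counts at 0 are zero
      have h0 : ∀ k, Dq m a y k 0 = 0 ∧ Ex m a y k 0 = 0 := by
        intro k; constructor <;> simp [Dq, Ex, Ncount, Ssum]
      by_cases hj : a 1 = j
      · have hD := Dq_succ_eq m a y j 0 hj
        have hE := Ex_succ_eq m a y j 0 hj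
        rw [(h0 j).1] at hD
        rw [(h0 j).2] at hE
        constructor
        · rw [hD]
          have := lept_le_one m j hm0 hjm
          have := hy0 1
          linarith
        · rw [hE]
          have := rept_nonneg m j
          have := hy1 1
          linarith
      · rw [Dq_succ_ne m a y j 0 hj, Ex_succ_ne m a y j 0 hj, (h0 j).1, (h0 j).2]
        norm_num
    · rcases halg.2 t ht with ⟨k, hk1, hkm, hdk, hek, hak⟩ | ⟨hnA, k, hk1, hkm, hek, hdk, h0k, h1k⟩
      · -- condition A step
        by_cases hj : a (t+1) = j
        · have hkj : k = j := by rw [hak] at hj; exact hj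
          subst hkj
          -- D_k t ≤ 0 and E_k t ≤ 0
          have hDE : Dq m a y k t ≤ 0 ∧ Ex m a y k t ≤ 0 := by
            rcases Nat.eq_zero_or_pos (Ncount a k t) with hN | hN
            · constructor <;>
                simp [Dq, Ex, Ssum_eq_zero a y k t hN, hN]
            · have hNpos : (0:ℝ) < (Ncount a k t : ℝ) := by exact_mod_cast hN
              constructor
              · rw [← mul_defc m a y k t hN]
                exact mul_nonpos_of_nonneg_of_nonpos (le_of_lt hNpos) hdk
              · rw [← mul_exc m a y k t hN]
                exact mul_nonpos_of_nonneg_of_nonpos (le_of_lt hNpos) hek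
          have hD := Dq_succ_eq m a y k t hj
          have hE := Ex_succ_eq m a y k t hj
          constructor
          · rw [hD]
            have := lept_le_one m k hm0 hkm
            have := hy0 (t+1)
            linarith [hDE.1]
          · rw [hE]
            have := rept_nonneg m k
            have := hy1 (t+1)
            linarith [hDE.2]
        · rw [Dq_succ_ne m a y j t hj, Ex_succ_ne m a y j t hj]
          exact ih j hjm
      · -- condition B step
        rcases hy (t+1) with hyv | hyv
        · -- y = 0, forecast k
          have hak : a (t+1) = k := h0k hyv
          by_cases hj : a (t+1) = j
          · have hkj : k = j := by rw [hak] at hj; exact hj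
            subst hkj
            have hN := Ncount_pos_of_exc_pos m hm0 a y k t hek
            have hNpos : (0:ℝ) < (Ncount a k t : ℝ) := by exact_mod_cast hN
            have hEpos : 0 < Ex m a y k t := by
              rw [← mul_exc m a y k t hN]; positivity
            have hsum := Dq_add_Ex m hm0 a y k t
            have hDneg : Dq m a y k t ≤ 0 := by
              have : -(Ncount a k t : ℝ) / m ≤ 0 := by
                apply div_nonpos_of_nonpos_of_nonneg <;> [linarith; positivity]
              linarith
            have hD := Dq_succ_eq m a y k t hj
            have hE := Ex_succ_eq m a y k t hj
            constructor
            · rw [hD, hyv]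
              have := lept_le_one m k hm0 (by omega)
              linarith
            · rw [hE, hyv]
              have := rept_nonneg m k
              have := (ih k (by omega)).2
              linarith
          · rw [Dq_succ_ne m a y j t hj, Ex_succ_ne m a y j t hj]
            exact ih j hjm
        · -- y = 1, forecast k+1
          have hak : a (t+1) = k + 1 := h1k hyv
          by_cases hj : a (t+1) = j
          · have hkj : k + 1 = j := by rw [hak] at hj; exact hj
            subst hkj
            have hN := Ncount_pos_of_defc_pos m hm0 a y (k+1) t hdk
            have hNpos : (0:ℝ) < (Ncount a (k+1) t : ℝ) := by exact_mod_cast hN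
            have hDpos : 0 < Dq m a y (k+1) t := by
              rw [← mul_defc m a y (k+1) t hN]; positivity
            have hsum := Dq_add_Ex m hm0 a y (k+1) t
            have hEneg : Ex m a y (k+1) t ≤ 0 := by
              have : -(Ncount a (k+1) t : ℝ) / m ≤ 0 := by
                apply div_nonpos_of_nonpos_of_nonneg <;> [linarith; positivity]
              linarith
            have hD := Dq_succ_eq m a y (k+1) t hj
            have hE := Ex_succ_eq m a y (k+1) t hj
            constructor
            · rw [hD, hyv]
              have := lept_le_one m (k+1) hm0 (by omega)
              have := (ih (k+1) (by omega)).1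
              linarith
            · rw [hE, hyv]
              have := rept_nonneg m (k+1)
              linarith
          · rw [Dq_succ_ne m a y j t hj, Ex_succ_ne m a y j t hj]
            exact ih j hjm

end Calib

/-- under POTC-Cal, for every i ∈ {1,…,m} and T ≥ 1,
E_T^{(i)} = N_i^T · max(d_i^T, e_i^T) ≤ 1. -/
theorem potc_cal_E_bound (m : ℕ) (hm : 2 ≤ m)
    (y : ℕ → ℝ) (hy : ∀ t, y t = 0 ∨ y t = 1)
    (a : ℕ → ℕ) (ha : ∀ t, 1 ≤ t → 1 ≤ a t ∧ a t ≤ m)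
    (halg : Calib.POTC m a y)
    (i : ℕ) (hi1 : 1 ≤ i) (him : i ≤ m) (T : ℕ) (hT : 1 ≤ T) :
    (Calib.Ncount a i T : ℝ) * max (Calib.defc m a y i T) (Calib.exc m a y i T) ≤ 1 := by

  obtain ⟨hD, hE⟩ := Calib.invariant m hm y hy a halg T i him
  rcases Nat.eq_zero_or_pos (Calib.Ncount a i T) with h0 | hN
  · rw [h0]; norm_num
  · have hNn : (0:ℝ) ≤ (Calib.Ncount a i T : ℝ) := by positivity
    rw [mul_max_of_nonneg _ _ hNn]
    exact max_le (by rw [Calib.mul_defc m a y i T hN]; exact hD)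
      (by rw [Calib.mul_exc m a y i T hN]; exact hE)
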